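/- For every integer d ≥ 2 and every real δ with δ ≥ 1 − √((d−1)/d), there exist a unit vector ψ in ℂ^d, d pairwise-distinct unit vectors ψ_1, …, ψ_d in ℂ^d with |⟨ψ_k, ψ⟩| ≥ 1 − δ for every k, and an orthonormal basis (e_j)_{j=1}^d of ℂ^d, such that Σ_{k=1}^d |⟨e_k, ψ_k⟩|² = 0. Consequently, any family of distributions p_k : Λ → ℝ over a finite set Λ (nonnegative, each summing to 1) and response functions ξ_j : Λ → ℝ (nonnegative, with Σ_{j=1}^d ξ_j(λ) = 1 for all λ) satisfying Σ_{λ} ξ_j(λ)p_k(λ) = |⟨e_j, ψ_k⟩|² for all j,k must have Σ_{λ} min_k p_k(λ) = 0. -/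

import Mathlib

open scoped ComplexInnerProductSpace

private lemma sum_ite_ne_aux {d : ℕ} {R : Type*} [CommRing R] (k : Fin d) (w : R) :
    ∑ j : Fin d, (if j = k then (0:R) else w) = (d : R) * w - w := by
  have h1 : ∀ j : Fin d, (if j = k then (0:R) else w) = w - (if j = k then w else 0) := by
    intro j; split <;> simp
  calc ∑ j : Fin d, (if j = k then (0:R) else w)
      = ∑ j : Fin d, (w - (if j = k then w else 0)) := Finset.sum_congr rfl (fun j _ => h1 j)
    _ = (d : R) * w - w := by
        rw [Finset.sum_sub_distrib, Finset.sum_const, Finset.sum_ite_eq']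
        simp [Finset.card_univ, nsmul_eq_mul]

/-- the no-go theorem for `δ`-continuous `ψ`-epistemic models. For every
`d ≥ 2` and every `δ ≥ 1 − √((d−1)/d)` there are a unit vector `ψ`, pairwise-distinct
unit vectors `ψ_1, …, ψ_d` with `|⟨ψ_k, ψ⟩| ≥ 1 − δ`, and an orthonormal basis
`(e_j)` of `ℂ^d` with `Σ_k |⟨e_k, ψ_k⟩|² = 0`; consequently any ontological model over
a finite set `Λ` reproducing the Born statistics `Σ_λ ξ_j(λ) p_k(λ) = |⟨e_j, ψ_k⟩|²`
has vanishing overlap `Σ_λ min_k p_k(λ) = 0`. -/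
theorem nogo_delta_continuous {d : ℕ} (hd : 2 ≤ d) {δ : ℝ}
    (hδ : 1 - Real.sqrt (((d : ℝ) - 1) / d) ≤ δ) :
    ∃ (ψ : EuclideanSpace ℂ (Fin d)) (ψk : Fin d → EuclideanSpace ℂ (Fin d))
      (e : OrthonormalBasis (Fin d) ℂ (EuclideanSpace ℂ (Fin d))),
      ‖ψ‖ = 1 ∧ (∀ k, ‖ψk k‖ = 1) ∧ Function.Injective ψk ∧
      (∀ k, 1 - δ ≤ ‖⟪ψk k, ψ⟫‖) ∧
      (∑ k, ‖⟪e k, ψk k⟫‖ ^ 2 = 0) ∧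
      (∀ (Λ : Type) [Fintype Λ] (p ξ : Fin d → Λ → ℝ),
        (∀ k l, 0 ≤ p k l) → (∀ k, ∑ l, p k l = 1) →
        (∀ j l, 0 ≤ ξ j l) → (∀ l, ∑ j, ξ j l = 1) →
        (∀ j k, ∑ l, ξ j l * p k l = ‖⟪e j, ψk k⟫‖ ^ 2) →
        ∑ l, (Finset.univ.inf'
            (Finset.univ_nonempty_iff.mpr (Fin.pos_iff_nonempty.mp (by omega)))
            fun k => p k l) = 0) := by
  have hd0 : (0:ℝ) < (d:ℝ) := by positivity
  have hd1 : (0:ℝ) < (d:ℝ) - 1 := by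
    have : (2:ℝ) ≤ (d:ℝ) := by exact_mod_cast hd
    linarith
  set s : ℝ := Real.sqrt d with hs
  set a : ℝ := Real.sqrt ((d:ℝ) - 1) with ha
  have hspos : 0 < s := Real.sqrt_pos.mpr hd0
  have hapos : 0 < a := Real.sqrt_pos.mpr hd1
  have hs2 : s ^ 2 = (d:ℝ) := Real.sq_sqrt hd0.le
  have ha2 : a ^ 2 = (d:ℝ) - 1 := Real.sq_sqrt hd1.le
  -- the vectors
  set ψ : EuclideanSpace ℂ (Fin d) := WithLp.toLp 2 (fun _ => ((1/s : ℝ) : ℂ)) with hψ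
  set ψk : Fin d → EuclideanSpace ℂ (Fin d) :=
    fun k => WithLp.toLp 2 (fun j => if j = k then 0 else ((1/a : ℝ) : ℂ)) with hψk
  set e : OrthonormalBasis (Fin d) ℂ (EuclideanSpace ℂ (Fin d)) :=
    EuclideanSpace.basisFun (Fin d) ℂ with he
  have hinner_e : ∀ j k, ⟪e j, ψk k⟫ = ψk k j := by
    intro j k
    simp [he, EuclideanSpace.basisFun_apply, EuclideanSpace.inner_single_left]
  refine ⟨ψ, ψk, e, ?_, ?_, ?_, ?_, ?_, ?_⟩
  · -- ‖ψ‖ = 1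
    rw [EuclideanSpace.norm_eq]
    have h1 : ∀ i : Fin d, ‖ψ i‖ ^ 2 = 1 / (d:ℝ) := by
      intro i
      have : ‖ψ i‖ = 1/s := by
        simp only [hψ, Complex.norm_real, Real.norm_eq_abs]
        exact abs_of_pos (by positivity)
      rw [this, div_pow, one_pow, hs2]
    rw [Finset.sum_congr rfl (fun i _ => h1 i)]
    rw [Finset.sum_const, Finset.card_univ, Fintype.card_fin, nsmul_eq_mul,
      mul_one_div, div_self hd0.ne']
    exact Real.sqrt_one
  · -- unit ψk
    intro k
    rw [EuclideanSpace.norm_eq]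
    have h1 : ∀ j : Fin d, ‖ψk k j‖ ^ 2 = if j = k then 0 else 1 / ((d:ℝ) - 1) := by
      intro j
      simp only [hψk]
      split
      · simp
      · have : ‖((1/a : ℝ) : ℂ)‖ = 1/a := by
          rw [Complex.norm_real, Real.norm_eq_abs]
          exact abs_of_pos (by positivity)
        rw [this, div_pow, one_pow, ha2]
    rw [Finset.sum_congr rfl (fun j _ => h1 j), sum_ite_ne_aux]
    rw [show (d:ℝ) * (1/((d:ℝ)-1)) - 1/((d:ℝ)-1) = ((d:ℝ)-1) / ((d:ℝ)-1) by ring,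
      div_self hd1.ne']
    exact Real.sqrt_one
  · -- injective
    intro k k' h
    by_contra hne
    have h2 := congrFun (congrArg WithLp.ofLp h) k
    simp only [hψk, if_pos rfl, if_neg hne] at h2
    have h0 : ((1/a : ℝ) : ℂ) ≠ 0 := by
      exact_mod_cast (show (1/a : ℝ) ≠ 0 from ne_of_gt (by positivity))
    exact h0 h2.symm
  · -- overlap
    intro k
    have hcalc : ⟪ψk k, ψ⟫ = ((((d:ℝ) - 1) / (a * s) : ℝ) : ℂ) := by
      rw [PiLp.inner_apply]
      have h1 : ∀ j : Fin d, (inner ℂ (ψk k j) (ψ j) : ℂ) =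
          if j = k then 0 else ((1/(a*s) : ℝ) : ℂ) := by
        intro j
        simp only [hψk, hψ]
        split
        · simp
        · rw [RCLike.inner_apply, Complex.conj_ofReal]
          push_cast
          field_simp
      rw [Finset.sum_congr rfl (fun j _ => h1 j), sum_ite_ne_aux]
      push_cast
      ring
    have hval : ((d:ℝ)-1)/(a*s) = a/s := by
      rw [div_eq_div_iff (mul_pos hapos hspos).ne' hspos.ne', ← ha2]
      ring
    have hval2 : Real.sqrt (((d:ℝ)-1)/d) = a/s := Real.sqrt_div hd1.le _
    rw [hcalc, Complex.norm_real, Real.norm_eq_abs,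
      abs_of_pos (by positivity), hval]
    rw [hval2] at hδ
    linarith
  · -- orthogonality sum
    apply Finset.sum_eq_zero
    intro k _
    rw [hinner_e]
    simp [hψk]
  · -- the model part
    intro Λ _ p ξ hp hpsum hξ hξsum hborn
    have hzero : ∀ j, ∑ l, ξ j l * p j l = 0 := by
      intro j
      rw [hborn j j, hinner_e]
      simp [hψk]
    apply Finset.sum_eq_zero
    intro l _
    have hne : (Finset.univ : Finset (Fin d)).Nonempty := Finset.univ_nonempty_iff.mpr
      (Fin.pos_iff_nonempty.mp (by omega))
    obtain ⟨j, hj⟩ : ∃ j, ξ j l ≠ 0 := by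
      by_contra hc
      push_neg at hc
      have := hξsum l
      simp [hc] at this
    have hpj : p j l = 0 := by
      have hterm : ξ j l * p j l = 0 := by
        have hall := (Finset.sum_eq_zero_iff_of_nonneg
          (fun l' _ => mul_nonneg (hξ j l') (hp j l'))).mp (hzero j)
        exact hall l (Finset.mem_univ l)
      rcases mul_eq_zero.mp hterm with h | h
      · exact absurd h hj
      · exact h
    apply le_antisymm
    · calc Finset.univ.inf' hne (fun k => p k l) ≤ p j l :=
            Finset.inf'_le _ (Finset.mem_univ j)
        _ = 0 := hpj
    · exact Finset.le_inf' hne _ (fun k _ => hp k l)
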